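/- A feasible flow vector x = (x_1^f, x_1^b, x_2^f, x_2^b) is a Wardrop equilibrium of the bifurcating-lane diverge model if and only if the pair y = (y_1, y_2) := (x_1^b, x_2^b) is a pure Nash equilibrium of the auxiliary two-player game; that is, for each i ≠ j in {1,2}, y_i minimizes u ↦ D_i(u, y_j)² over u ∈ [0, q_i]. -/

import Mathlib

/-- The cost-difference function `D_i(u, v) = C_i^f·(q_i − u) − C^b·(λ_i·u + μ_i·v) − ν·u·v`,
which equals `J_i^f(x) − J_i^b(x)` when `x_i^b = u`, `x_i^f = q_i − u`, `x_j^b = v`. -/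
noncomputable def Dfun (Cf Cb nu lam mu q u v : ℝ) : ℝ :=
  Cf * (q - u) - Cb * (lam * u + mu * v) - nu * u * v

/-- Key linear lemma: minimizing `(A - K·u)²` over `[0, q]` vs. complementarity at `b`. -/
lemma lin_key (A K q b : ℝ) (hK : 0 < K) (hb0 : 0 ≤ b) (hbq : b ≤ q) :
    ((q - b) * (A - K * b) ≤ 0 ∧ b * (K * b - A) ≤ 0) ↔
    ∀ u ∈ Set.Icc (0 : ℝ) q, (A - K * b) ^ 2 ≤ (A - K * u) ^ 2 := by
  constructor
  · rintro ⟨h1, h2⟩ u ⟨hu0, huq⟩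
    rcases lt_trichotomy (A - K * b) 0 with hD | hD | hD
    · have hb : b = 0 := by nlinarith
      subst hb
      have hKu : 0 ≤ K * u := mul_nonneg hK.le hu0
      nlinarith [mul_nonneg hKu (show (0:ℝ) ≤ -(A - K * 0) by linarith), sq_nonneg (K * u)]
    · nlinarith [sq_nonneg (A - K * u)]
    · have hb : b = q := by nlinarith
      have huq' : u ≤ b := by rw [hb]; exact huq
      have hKu : 0 ≤ K * (b - u) := mul_nonneg hK.le (by linarith)
      nlinarith [mul_nonneg hKu hD.le, sq_nonneg (K * (b - u))]
  · intro h
    have hq0 : (0 : ℝ) ≤ q := le_trans hb0 hbq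
    constructor
    · by_contra hc
      push_neg at hc
      have hq' : b < q := by
        by_contra h'
        push_neg at h'
        have : q = b := le_antisymm h' hbq
        rw [this] at hc
        nlinarith
      have hD : 0 < A - K * b := by nlinarith
      have hA0 : 0 < A := by nlinarith
      by_cases hA : A / K ≤ q
      · have h0 : (0 : ℝ) ≤ A / K := le_of_lt (div_pos hA0 hK)
        have hz : A - K * (A / K) = 0 := by field_simp; ring
        have := h (A / K) ⟨h0, hA⟩
        rw [hz] at this
        nlinarith
      · push_neg at hA
        have hqK : q * K < A := (lt_div_iff₀ hK).mp hA
        have hDq : 0 < A - K * q := by nlinarith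
        have := h q ⟨hq0, le_refl q⟩
        have ht : 0 < K * (q - b) := mul_pos hK (by linarith)
        nlinarith [mul_pos ht hD, mul_pos ht hDq]
    · by_contra hc
      push_neg at hc
      have hb' : 0 < b := by
        by_contra h'
        push_neg at h'
        have : b = 0 := le_antisymm h' hb0
        rw [this] at hc
        nlinarith
      have hD : 0 < K * b - A := by nlinarith
      by_cases hA : 0 ≤ A / K
      · have h1 : A / K < b := by
          rw [div_lt_iff₀ hK]
          nlinarith
        have hz : A - K * (A / K) = 0 := by field_simp; ring
        have := h (A / K) ⟨hA, le_trans (le_of_lt h1) hbq⟩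
        rw [hz] at this
        nlinarith
      · push_neg at hA
        have hA0 : A < 0 := by
          by_contra hA0
          push_neg at hA0
          exact absurd (div_nonneg hA0 (le_of_lt hK)) (not_le.mpr hA)
        have := h 0 ⟨le_refl 0, hq0⟩
        have hKb : 0 < K * b := mul_pos hK hb'
        nlinarith [mul_pos hKb (show (0:ℝ) < -A by linarith), sq_nonneg (K * b)]

/-- A feasible flow vector `(x1f, x1b, x2f, x2b)` is a Wardrop equilibrium of
the bifurcating-lane diverge model if and only if `(y₁, y₂) := (x1b, x2b)` is a pure Nash
equilibrium of the auxiliary two-player game, i.e. for each `i ≠ j`, `y_i` minimizes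
`u ↦ D_i(u, y_j)²` over `[0, q_i]`. -/
theorem wardrop_iff_auxiliary_nash
    (C1f C2f Cb nu lam1 lam2 mu1 mu2 q1 q2 : ℝ)
    (hC1f : 0 < C1f) (hC2f : 0 < C2f) (hCb : 0 < Cb) (hnu : 0 < nu)
    (hlam1 : 0 < lam1) (hlam1' : lam1 ≤ 1) (hlam2 : 0 < lam2) (hlam2' : lam2 ≤ 1)
    (hmu1 : 0 < mu1) (hmu1' : mu1 ≤ 1) (hmu2 : 0 < mu2) (hmu2' : mu2 ≤ 1)
    (hq1 : 0 ≤ q1) (hq2 : 0 ≤ q2) (hq : q1 + q2 = 1)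
    (x1f x1b x2f x2b : ℝ)
    (hx1f : 0 ≤ x1f) (hx1b : 0 ≤ x1b) (hx2f : 0 ≤ x2f) (hx2b : 0 ≤ x2b)
    (hsum1 : x1f + x1b = q1) (hsum2 : x2f + x2b = q2) :
    (x1f * (C1f * x1f - (Cb * (lam1 * x1b + mu1 * x2b) + nu * x1b * x2b)) ≤ 0 ∧
     x1b * ((Cb * (lam1 * x1b + mu1 * x2b) + nu * x1b * x2b) - C1f * x1f) ≤ 0 ∧
     x2f * (C2f * x2f - (Cb * (lam2 * x2b + mu2 * x1b) + nu * x2b * x1b)) ≤ 0 ∧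
     x2b * ((Cb * (lam2 * x2b + mu2 * x1b) + nu * x2b * x1b) - C2f * x2f) ≤ 0)
    ↔
    ((∀ u ∈ Set.Icc (0 : ℝ) q1,
        (Dfun C1f Cb nu lam1 mu1 q1 x1b x2b) ^ 2 ≤ (Dfun C1f Cb nu lam1 mu1 q1 u x2b) ^ 2) ∧
     (∀ u ∈ Set.Icc (0 : ℝ) q2,
        (Dfun C2f Cb nu lam2 mu2 q2 x2b x1b) ^ 2 ≤ (Dfun C2f Cb nu lam2 mu2 q2 u x1b) ^ 2)) := by
  have hx1 : x1f = q1 - x1b := by linarith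
  have hx2 : x2f = q2 - x2b := by linarith
  subst hx1 hx2
  have hb1 : x1b ≤ q1 := by linarith
  have hb2 : x2b ≤ q2 := by linarith
  have hK1pos : (0:ℝ) < C1f + Cb * lam1 + nu * x2b := by nlinarith
  have hK2pos : (0:ℝ) < C2f + Cb * lam2 + nu * x1b := by nlinarith
  have key1 := lin_key (C1f * q1 - Cb * mu1 * x2b) (C1f + Cb * lam1 + nu * x2b) q1 x1b
    hK1pos hx1b hb1
  have key2 := lin_key (C2f * q2 - Cb * mu2 * x1b) (C2f + Cb * lam2 + nu * x1b) q2 x2b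
    hK2pos hx2b hb2
  have e1 : ∀ u : ℝ, Dfun C1f Cb nu lam1 mu1 q1 u x2b =
      (C1f * q1 - Cb * mu1 * x2b) - (C1f + Cb * lam1 + nu * x2b) * u := by
    intro u; simp only [Dfun]; ring
  have e2 : ∀ u : ℝ, Dfun C2f Cb nu lam2 mu2 q2 u x1b =
      (C2f * q2 - Cb * mu2 * x1b) - (C2f + Cb * lam2 + nu * x1b) * u := by
    intro u; simp only [Dfun]; ring
  have w1 : (q1 - x1b) * ((C1f * q1 - Cb * mu1 * x2b) - (C1f + Cb * lam1 + nu * x2b) * x1b) =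
      (q1 - x1b) * (C1f * (q1 - x1b) - (Cb * (lam1 * x1b + mu1 * x2b) + nu * x1b * x2b)) := by
    ring
  have w2 : x1b * ((C1f + Cb * lam1 + nu * x2b) * x1b - (C1f * q1 - Cb * mu1 * x2b)) =
      x1b * ((Cb * (lam1 * x1b + mu1 * x2b) + nu * x1b * x2b) - C1f * (q1 - x1b)) := by
    ring
  have w3 : (q2 - x2b) * ((C2f * q2 - Cb * mu2 * x1b) - (C2f + Cb * lam2 + nu * x1b) * x2b) =
      (q2 - x2b) * (C2f * (q2 - x2b) - (Cb * (lam2 * x2b + mu2 * x1b) + nu * x2b * x1b)) := by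
    ring
  have w4 : x2b * ((C2f + Cb * lam2 + nu * x1b) * x2b - (C2f * q2 - Cb * mu2 * x1b)) =
      x2b * ((Cb * (lam2 * x2b + mu2 * x1b) + nu * x2b * x1b) - C2f * (q2 - x2b)) := by
    ring
  rw [w1, w2] at key1
  rw [w3, w4] at key2
  constructor
  · rintro ⟨h1, h2, h3, h4⟩
    refine ⟨fun u hu => ?_, fun u hu => ?_⟩
    · rw [e1, e1]; exact key1.mp ⟨h1, h2⟩ u hu
    · rw [e2, e2]; exact key2.mp ⟨h3, h4⟩ u hu
  · rintro ⟨h1, h2⟩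
    have k1 := key1.mpr (by intro u hu; have := h1 u hu; rwa [e1, e1] at this)
    have k2 := key2.mpr (by intro u hu; have := h2 u hu; rwa [e2, e2] at this)
    exact ⟨k1.1, k1.2, k2.1, k2.2⟩
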